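/- The noncommutative Redei–Berge function of any digraph is symmetric: for any digraph X = (V, E), every coloring f : V → ℤ⁺, and every permutation δ of ℤ⁺, the number of (f, X)-friendly V-listings equals the number of (δ∘f, X)-friendly V-listings, i.e. N(f, X) = N(δ∘f, X). -/

import Mathlib

open Tuple

/-- Stability of `Tuple.sort`: equal values keep their relative order. -/
lemma sort_stable {V : Type*} [LinearOrder V] {n : ℕ} (h : Fin n → V) {i j : Fin n} (hij : i < j)
    (he : h (Tuple.sort h i) = h (Tuple.sort h j)) : Tuple.sort h i < Tuple.sort h j :=
  ((Tuple.eq_sort_iff.mp rfl).2) i j hij he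

/-- Key structural lemma: if `f ∘ σ` is monotone and `f`, `g` have the same fibers, then
positions of the sorted-by-`g` listing that are consecutive and in the same `g`-fiber come
from consecutive positions of `σ`. -/
lemma consecutive_lemma {V : Type*} {n : ℕ} (f g : V → ℕ+)
    (hfg : ∀ x y, f x = f y ↔ g x = g y)
    (σ : Fin n → V) (hmono : Monotone fun i => f (σ i))
    (i : Fin n) (h : (i : ℕ) + 1 < n)
    (heq : g (σ (Tuple.sort (g ∘ σ) i)) = g (σ (Tuple.sort (g ∘ σ) ⟨(i : ℕ) + 1, h⟩))) :
    ∃ h' : ((Tuple.sort (g ∘ σ) i : Fin n) : ℕ) + 1 < n,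
      Tuple.sort (g ∘ σ) ⟨(i : ℕ) + 1, h⟩ = ⟨(Tuple.sort (g ∘ σ) i : ℕ) + 1, h'⟩ := by
  set π := Tuple.sort (g ∘ σ) with hπ
  set i' : Fin n := ⟨(i : ℕ) + 1, h⟩ with hi'
  have hii' : i < i' := by simp [hi', Fin.lt_def]
  have hstab : ∀ a b : Fin n, a < b → g (σ (π a)) = g (σ (π b)) → π a < π b := fun a b hab he =>
    sort_stable (g ∘ σ) hab he
  have hlt : π i < π i' := hstab i i' hii' heq
  have h' : ((π i : Fin n) : ℕ) + 1 < n := lt_of_le_of_lt (Nat.succ_le_of_lt hlt) (π i').2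
  refine ⟨h', ?_⟩
  set m : Fin n := ⟨(π i : ℕ) + 1, h'⟩ with hm
  have hmlt : π i < m := by simp [hm, Fin.lt_def]
  have hm_le : m ≤ π i' := by rw [Fin.le_def]; exact Nat.succ_le_of_lt hlt
  have hfeq : f (σ (π i)) = f (σ (π i')) := (hfg _ _).mpr heq
  have hf_m : f (σ m) = f (σ (π i)) := by
    have h1 : f (σ (π i)) ≤ f (σ m) := hmono hmlt.le
    have h2 : f (σ m) ≤ f (σ (π i')) := hmono hm_le
    exact le_antisymm (hfeq ▸ h2) h1
  have hg_m : g (σ m) = g (σ (π i)) := (hfg _ _).mp hf_m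
  set j : Fin n := π⁻¹ m with hj
  have hπj : π j = m := by simp [hj]
  have hji : i < j := by
    rcases lt_trichotomy j i with hlt' | heq' | hgt'
    · exact absurd (hπj ▸ hstab j i hlt' (by rw [hπj, hg_m])) (not_lt_of_ge hmlt.le)
    · exact absurd (hπj ▸ congrArg π heq') (by simp [hm, Fin.ext_iff])
    · exact hgt'
  have hji' : j ≤ i' := by
    by_contra hc
    push_neg at hc
    exact absurd (hπj ▸ hstab i' j hc (by rw [hπj, hg_m, heq])) (not_lt_of_ge hm_le)
  have hjeq : j = i' := le_antisymm hji' (by rw [Fin.le_def]; exact Nat.succ_le_of_lt hji)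
  rw [← hjeq, hπj]

/-- A `V`-listing `σ` (a bijection `Fin n ≃ V`) is `(f, X)`-friendly for the digraph with
edge set `E` and the coloring `f` if the colors are weakly increasing along the listing,
and strictly increase along every edge of the digraph. -/
def Friendly {V : Type*} [Fintype V] (E : Set (V × V)) (f : V → ℕ+)
    (σ : Fin (Fintype.card V) ≃ V) : Prop :=
  Monotone (fun i => f (σ i)) ∧
  ∀ i : Fin (Fintype.card V), ∀ h : (i : ℕ) + 1 < Fintype.card V,
    (σ i, σ ⟨(i : ℕ) + 1, h⟩) ∈ E → f (σ i) < f (σ ⟨(i : ℕ) + 1, h⟩)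

/-- Sorting a friendly listing by the new colors yields a friendly listing. -/
lemma friendly_sort {V : Type*} [Fintype V] (E : Set (V × V)) (f g : V → ℕ+)
    (hfg : ∀ x y, f x = f y ↔ g x = g y)
    (σ : Fin (Fintype.card V) ≃ V) (hσ : Friendly E f σ) :
    Friendly E g ((Tuple.sort (g ∘ σ)).trans σ) := by
  set π := Tuple.sort (g ∘ σ) with hπ
  have hcoe : ∀ i, ((π.trans σ) i) = σ (π i) := fun i => rfl
  have hmono : Monotone fun i => g ((π.trans σ) i) := by
    have := Tuple.monotone_sort (g ∘ σ)
    exact this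
  refine ⟨hmono, fun i h hE => ?_⟩
  have hle : g ((π.trans σ) i) ≤ g ((π.trans σ) ⟨(i : ℕ) + 1, h⟩) :=
    hmono (by simp [Fin.le_def])
  rcases lt_or_eq_of_le hle with hlt | heqg
  · exact hlt
  · exfalso
    obtain ⟨h', hcons⟩ := consecutive_lemma f g hfg σ hσ.1 i h heqg
    rw [hcoe, hcoe, hcons] at hE
    have := hσ.2 (π i) h' hE
    have heqf : f (σ (π i)) = f (σ ⟨(π i : ℕ) + 1, h'⟩) := by
      apply (hfg _ _).mpr
      rw [hcoe, hcoe, hcons] at heqg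
      exact heqg
    exact absurd this (by rw [heqf]; exact lt_irrefl _)

/-- Sorting by `g` and then sorting back by `f` recovers the original listing. -/
lemma sort_sort_inv {V : Type*} [Fintype V] (f g : V → ℕ+)
    (hfg : ∀ x y, f x = f y ↔ g x = g y)
    (σ : Fin (Fintype.card V) ≃ V) (hmono : Monotone fun i => f (σ i)) :
    (Tuple.sort (f ∘ ((Tuple.sort (g ∘ σ)).trans σ))).trans ((Tuple.sort (g ∘ σ)).trans σ)
      = σ := by
  set π := Tuple.sort (g ∘ σ) with hπ
  set τ : Fin (Fintype.card V) ≃ V := π.trans σ with hτ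
  have key : π⁻¹ = Tuple.sort (f ∘ τ) := by
    rw [Tuple.eq_sort_iff]
    constructor
    · have : (f ∘ τ) ∘ ⇑π⁻¹ = fun i => f (σ i) := by
        funext i; simp [hτ]
      rw [this]; exact hmono
    · intro i j hij he
      have he' : g (σ i) = g (σ j) := by
        apply (hfg _ _).mp
        simpa [hτ] using he
      rcases lt_trichotomy (π⁻¹ i) (π⁻¹ j) with h1 | h2 | h3
      · exact h1
      · exact absurd (π⁻¹.injective h2) (ne_of_lt hij)
      · exfalso
        have := sort_stable (g ∘ σ) h3 (by simp [← hπ, he'.symm])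
        rw [← hπ] at this
        simp at this
        exact absurd hij (not_lt_of_gt this)
  have : (Tuple.sort (f ∘ τ)).trans τ = (π⁻¹).trans τ := by rw [key]
  rw [this, hτ]
  ext i
  simp

/-- `redeiBergeCount E f` is `N(f, X)`, the number of `(f, X)`-friendly `V`-listings
of the digraph `X = (V, E)`. -/
noncomputable def redeiBergeCount {V : Type*} [Fintype V] (E : Set (V × V)) (f : V → ℕ+) : ℕ :=
  Nat.card {σ : Fin (Fintype.card V) ≃ V // Friendly E f σ}

/-- The noncommutative Redei–Berge function of any digraph is symmetric: for any digraph
`X = (V, E)`, any coloring `f`, and any permutation `δ` of the positive integers,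
`N(f, X) = N(δ ∘ f, X)`. -/
theorem redeiBergeCount_symmetric {V : Type*} [Fintype V] (E : Set (V × V))
    (f : V → ℕ+) (δ : Equiv.Perm ℕ+) :
    redeiBergeCount E f = redeiBergeCount E (δ ∘ f) := by
  set g : V → ℕ+ := δ ∘ f with hg
  have hfg : ∀ x y, f x = f y ↔ g x = g y := by
    intro x y
    simp [hg, Function.comp, δ.injective.eq_iff]
  have hgf : ∀ x y, g x = g y ↔ f x = f y := fun x y => (hfg x y).symm
  apply Nat.card_congr
  exact
    { toFun := fun σ => ⟨(Tuple.sort (g ∘ σ.1)).trans σ.1, friendly_sort E f g hfg σ.1 σ.2⟩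
      invFun := fun τ => ⟨(Tuple.sort (f ∘ τ.1)).trans τ.1, friendly_sort E g f hgf τ.1 τ.2⟩
      left_inv := fun σ => Subtype.ext (sort_sort_inv f g hfg σ.1 σ.2.1)
      right_inv := fun τ => Subtype.ext (sort_sort_inv g f hgf τ.1 τ.2.1) }
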